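/- Let I ⊆ R = MvPolynomial (Fin N) ℂ be an M-graded ideal, m ∈ M, and 1 ≤ i ≤ N. Then Φ_i(D_0^m(I)) = Φ_i(D_0^m(I ∩ ⟨x_i⟩)) = D_0^{m − w(i)}(I : x_i); explicitly, for every M-homogeneous polynomial q of degree m − w(i), the following are equivalent: (a) λ_q vanishes on the ideal quotient I : ⟨x_i⟩; (b) there exists an M-homogeneous p of degree m with λ_p vanishing on I and λ_q(f) = λ_p(x_i · f) for all f ∈ R; (c) there exists an M-homogeneous p of degree m with λ_p vanishing on I ∩ ⟨x_i⟩ and λ_q(f) = λ_p(x_i · f) for all f ∈ R. -/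

import Mathlib

open MvPolynomial

/-- The Macaulay pairing `λ_p(f) = ∑_α coeff(α,p) * coeff(α,f)`, as a linear functional. -/
noncomputable def lam {N : ℕ} (p : MvPolynomial (Fin N) ℂ) :
    MvPolynomial (Fin N) ℂ →ₗ[ℂ] ℂ where
  toFun f := ∑ α ∈ p.support, coeff α p * coeff α f
  map_add' f g := by simp [mul_add, Finset.sum_add_distrib]
  map_smul' c f := by
    simp [MvPolynomial.coeff_smul, Finset.mul_sum, mul_left_comm]

/-- An ideal is `M`-graded if it is generated by a set of `M`-homogeneous polynomials. -/
def IsMGraded {N : ℕ} {M : Type*} [AddCommGroup M] (w : Fin N → M)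
    (I : Ideal (MvPolynomial (Fin N) ℂ)) : Prop :=
  ∃ S : Set (MvPolynomial (Fin N) ℂ),
    (∀ s ∈ S, ∃ m : M, s.IsWeightedHomogeneous w m) ∧ I = Ideal.span S

section MacaulayAux

variable {N : ℕ}

lemma lam_apply (p f : MvPolynomial (Fin N) ℂ) :
    lam p f = ∑ α ∈ p.support, coeff α p * coeff α f := rfl

lemma lam_eq_sum_superset (p f : MvPolynomial (Fin N) ℂ)
    {t : Finset (Fin N →₀ ℕ)} (h : p.support ⊆ t) :
    lam p f = ∑ α ∈ t, coeff α p * coeff α f := by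
  rw [lam_apply]
  refine Finset.sum_subset h fun x _ hx => ?_
  rw [MvPolynomial.notMem_support_iff.mp hx, zero_mul]

lemma lam_comm (p f : MvPolynomial (Fin N) ℂ) : lam p f = lam f p := by
  rw [lam_eq_sum_superset p f (Finset.subset_union_left :
        p.support ⊆ p.support ∪ f.support),
      lam_eq_sum_superset f p (Finset.subset_union_right :
        f.support ⊆ p.support ∪ f.support)]
  exact Finset.sum_congr rfl fun α _ => mul_comm _ _

lemma lam_add_left (p q f : MvPolynomial (Fin N) ℂ) :
    lam (p + q) f = lam p f + lam q f := by
  rw [lam_comm (p + q) f, map_add, lam_comm f p, lam_comm f q]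

lemma lam_monomial_left (γ : Fin N →₀ ℕ) (c : ℂ) (f : MvPolynomial (Fin N) ℂ) :
    lam (monomial γ c) f = c * coeff γ f := by
  classical
  rcases eq_or_ne c 0 with rfl | hc
  · rw [monomial_zero]
    simp [lam_apply]
  · rw [lam_apply, support_monomial, if_neg hc, Finset.sum_singleton, coeff_monomial,
      if_pos rfl]

lemma lam_shift (i : Fin N) (q f : MvPolynomial (Fin N) ℂ) :
    lam (X i * q) (X i * f) = lam q f := by
  induction q using MvPolynomial.induction_on' with
  | monomial u a =>
    have hX : (X i : MvPolynomial (Fin N) ℂ) * monomial u a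
        = monomial (Finsupp.single i 1 + u) a := by
      rw [← pow_one (X i), X_pow_eq_monomial, monomial_mul, one_mul]
    rw [hX, lam_monomial_left, lam_monomial_left, coeff_X_mul]
  | add p q hp hq => rw [mul_add, lam_add_left, lam_add_left, hp, hq]

lemma lam_eq_zero_of (p f : MvPolynomial (Fin N) ℂ)
    (h : ∀ α ∈ p.support, coeff α f = 0) : lam p f = 0 :=
  Finset.sum_eq_zero fun α hα => by rw [h α hα, mul_zero]

lemma coeff_X_mul_of_ne {i : Fin N} {α : Fin N →₀ ℕ} (h : α i = 0)
    (f : MvPolynomial (Fin N) ℂ) : coeff α (X i * f) = 0 := by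
  classical
  rw [coeff_X_mul', if_neg]
  simp [Finsupp.mem_support_iff, h]

/-- total degree of an exponent vector -/
abbrev degD (α : Fin N →₀ ℕ) : ℕ := α.sum fun _ e => e

lemma degD_add (α β : Fin N →₀ ℕ) : degD (α + β) = degD α + degD β :=
  Finsupp.sum_add_index' (fun _ => rfl) (fun _ _ _ => rfl)

lemma mem_span_range_X_deg {b : MvPolynomial (Fin N) ℂ}
    (hb : b ∈ Ideal.span (Set.range (X : Fin N → MvPolynomial (Fin N) ℂ))) :
    ∀ γ ∈ b.support, 1 ≤ degD γ := by
  classical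
  induction hb using Submodule.span_induction with
  | mem x hx =>
    obtain ⟨j, rfl⟩ := hx
    intro γ hγ
    have hcoeff := MvPolynomial.mem_support_iff.mp hγ
    rw [coeff_X'] at hcoeff
    by_cases h : Finsupp.single j 1 = γ
    · subst h
      rw [show degD (Finsupp.single j 1) = 1 from Finsupp.sum_single_index rfl]
    · exact absurd (if_neg h) (fun hh => hcoeff (hh ▸ rfl))
  | zero => intro γ hγ; simp at hγ
  | add x y hx hy ihx ihy =>
    intro γ hγ
    rcases Finset.mem_union.mp (MvPolynomial.support_add hγ) with h | h
    exacts [ihx γ h, ihy γ h]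
  | smul a x hx ih =>
    intro γ hγ
    rw [smul_eq_mul] at hγ
    obtain ⟨β, hβ, γ', hγ', rfl⟩ := Finset.mem_add.mp (MvPolynomial.support_mul a x hγ)
    rw [degD_add]
    have := ih γ' hγ'
    omega

lemma mem_pow_span_X_deg (k : ℕ) (h : MvPolynomial (Fin N) ℂ)
    (hh : h ∈ (Ideal.span (Set.range (X : Fin N → MvPolynomial (Fin N) ℂ))) ^ k) :
    ∀ γ ∈ h.support, k ≤ degD γ := by
  classical
  induction k generalizing h with
  | zero => intro γ _; exact Nat.zero_le _
  | succ k ih =>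
    rw [pow_succ] at hh
    refine Submodule.mul_induction_on hh ?_ ?_
    · intro a ha b hb γ hγ
      obtain ⟨β, hβ, γ', hγ', rfl⟩ := Finset.mem_add.mp (MvPolynomial.support_mul a b hγ)
      have h1 := ih a ha β hβ
      have h2 := mem_span_range_X_deg hb γ' hγ'
      rw [degD_add]
      omega
    · intro x y hx hy γ hγ
      rcases Finset.mem_union.mp (MvPolynomial.support_add hγ) with h | h
      exacts [hx γ h, hy γ h]

lemma lam_vanish_pow {s h : MvPolynomial (Fin N) ℂ}
    (hh : h ∈ (Ideal.span (Set.range (X : Fin N → MvPolynomial (Fin N) ℂ)))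
      ^ (s.totalDegree + 1)) :
    lam s h = 0 := by
  apply lam_eq_zero_of
  intro α hα
  by_contra hc
  have h1 := mem_pow_span_X_deg _ h hh α (MvPolynomial.mem_support_iff.mpr hc)
  have h2 : degD α ≤ s.totalDegree := MvPolynomial.le_totalDegree hα
  omega

lemma monomial_one_mem_pow {l : ℕ} {α : Fin N →₀ ℕ} {j : Fin N} (hj : l ≤ α j) :
    monomial α (1 : ℂ) ∈
      (Ideal.span (Set.range (X : Fin N → MvPolynomial (Fin N) ℂ))) ^ l := by
  have hle : Finsupp.single j l ≤ α := Finsupp.single_le_iff.mpr hj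
  have key : monomial α (1 : ℂ) = X j ^ l * monomial (α - Finsupp.single j l) 1 := by
    rw [X_pow_eq_monomial, monomial_mul, one_mul, add_tsub_cancel_of_le hle]
  rw [key]
  exact Ideal.mul_mem_right _ _ (Ideal.pow_mem_pow (Ideal.subset_span (Set.mem_range_self j)) l)

lemma monomial_one_mem_span_X {i : Fin N} {α : Fin N →₀ ℕ} (h : α i ≠ 0) :
    monomial α (1 : ℂ) ∈ Ideal.span {(X i : MvPolynomial (Fin N) ℂ)} := by
  rw [Ideal.mem_span_singleton]
  have hle : Finsupp.single i 1 ≤ α :=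
    Finsupp.single_le_iff.mpr (Nat.one_le_iff_ne_zero.mpr h)
  refine ⟨monomial (α - Finsupp.single i 1) 1, ?_⟩
  rw [← pow_one (X i), X_pow_eq_monomial, monomial_mul, one_mul, add_tsub_cancel_of_le hle]

/-- Extend a functional from a subspace, vanishing on another subspace. -/
lemma ext_helper {V : Type*} [AddCommGroup V] [Module ℂ V] (U W : Submodule ℂ V)
    (φ : U →ₗ[ℂ] ℂ) (h : ∀ x (hx : x ∈ U), x ∈ W → φ ⟨x, hx⟩ = 0) :
    ∃ χ : V →ₗ[ℂ] ℂ, (∀ x (hx : x ∈ U), χ x = φ ⟨x, hx⟩) ∧ (∀ x ∈ W, χ x = 0) := by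
  let ρ : U →ₗ[ℂ] V ⧸ W := W.mkQ.comp U.subtype
  have hker : LinearMap.ker ρ ≤ LinearMap.ker φ := by
    intro u hu
    rw [LinearMap.mem_ker] at hu ⊢
    have huW : (u : V) ∈ W := by
      rwa [LinearMap.comp_apply, Submodule.mkQ_apply, Submodule.Quotient.mk_eq_zero] at hu
    have := h u.1 u.2 huW
    simpa using this
  let φ' : (↥U ⧸ LinearMap.ker ρ) →ₗ[ℂ] ℂ := Submodule.liftQ _ φ hker
  let e := ρ.quotKerEquivRange
  obtain ⟨g, hg⟩ := LinearMap.exists_extend (φ'.comp e.symm.toLinearMap)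
  refine ⟨g.comp W.mkQ, ?_, ?_⟩
  · intro x hx
    have hmem : W.mkQ x ∈ LinearMap.range ρ := ⟨⟨x, hx⟩, rfl⟩
    have h1 : g.comp W.mkQ x = φ'.comp e.symm.toLinearMap ⟨W.mkQ x, hmem⟩ := by
      rw [← hg]; rfl
    have h2 : e.symm ⟨W.mkQ x, hmem⟩ =
        Submodule.Quotient.mk (⟨x, hx⟩ : U) := by
      rw [LinearEquiv.symm_apply_eq]
      exact Subtype.ext (by simp [e, ρ])
    rw [h1]
    show φ' (e.symm ⟨W.mkQ x, hmem⟩) = _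
    rw [h2]
    exact Submodule.liftQ_apply _ φ _
  · intro x hx
    have hzero : W.mkQ x = 0 := (Submodule.Quotient.mk_eq_zero W).mpr hx
    rw [LinearMap.comp_apply, hzero, map_zero]

/-- The core construction: a finitely supported representation of the functional `-λ_s`
on `I` by a polynomial `r` supported on `x_i`-free monomials. -/
lemma core {I : Ideal (MvPolynomial (Fin N) ℂ)} (i : Fin N) (s : MvPolynomial (Fin N) ℂ)
    (hs : ∀ g ∈ I ⊓ Ideal.span {(X i : MvPolynomial (Fin N) ℂ)}, lam s g = 0) :
    ∃ r : MvPolynomial (Fin N) ℂ,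
      (∀ α ∈ r.support, α i = 0) ∧ ∀ f ∈ I, lam s f + lam r f = 0 := by
  classical
  set Mi : Ideal (MvPolynomial (Fin N) ℂ) := Ideal.span (Set.range X) with hMi
  set K : Ideal (MvPolynomial (Fin N) ℂ) := I ⊔ Ideal.span {X i} with hK
  obtain ⟨χ₁, hχ₁U, hχ₁W⟩ :=
    ext_helper (I.restrictScalars ℂ)
      ((Ideal.span {(X i : MvPolynomial (Fin N) ℂ)}).restrictScalars ℂ)
      (-((lam s).domRestrict (I.restrictScalars ℂ)))
      (by intro x hx hxW
          simp only [LinearMap.neg_apply, LinearMap.domRestrict_apply]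
          rw [hs x ⟨hx, hxW⟩, neg_zero])
  set k₀ := s.totalDegree + 1 with hk₀
  obtain ⟨c, hc⟩ := Ideal.exists_pow_inf_eq_pow_smul Mi K
  set l := c + k₀ with hl
  have hARl := hc l (Nat.le_add_right c k₀)
  have hlc : l - c = k₀ := by omega
  rw [hlc] at hARl
  have hIK : ∀ x ∈ Mi ^ k₀ * K, χ₁ x = 0 := by
    intro x hx
    refine Submodule.mul_induction_on hx ?_ ?_
    · intro a ha b hb
      obtain ⟨f, hf, g, hg, rfl⟩ := Submodule.mem_sup.mp hb
      rw [mul_add, map_add]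
      have h1 : χ₁ (a * f) = -(lam s (a * f)) := by
        have := hχ₁U (a * f) (Ideal.mul_mem_left I a hf)
        simpa using this
      have h2 : lam s (a * f) = 0 :=
        lam_vanish_pow (Ideal.mul_mem_right f _ ha)
      have h3 : χ₁ (a * g) = 0 := hχ₁W (a * g) (Ideal.mul_mem_left _ a hg)
      rw [h1, h2, h3, neg_zero, add_zero]
    · intro x y hx hy; rw [map_add, hx, hy, add_zero]
  have hMl : ∀ x, x ∈ K → x ∈ Mi ^ l → χ₁ x = 0 := by
    intro x hxK hxl
    have htop : Mi ^ l • (⊤ : Ideal (MvPolynomial (Fin N) ℂ)) = Mi ^ l := by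
      rw [Ideal.smul_eq_mul, Ideal.mul_top]
    have hx' : x ∈ Mi ^ l • (⊤ : Ideal (MvPolynomial (Fin N) ℂ)) ⊓ K := by
      rw [Submodule.mem_inf, htop]
      exact ⟨hxl, hxK⟩
    rw [hARl] at hx'
    have hle2 : Mi ^ k₀ • (Mi ^ c • (⊤ : Ideal (MvPolynomial (Fin N) ℂ)) ⊓ K)
        ≤ Mi ^ k₀ * K := by
      rw [Ideal.smul_eq_mul]
      exact Ideal.mul_mono_right inf_le_right
    exact hIK x (hle2 hx')
  obtain ⟨χ, hχU, hχW⟩ :=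
    ext_helper (K.restrictScalars ℂ) ((Mi ^ l).restrictScalars ℂ)
      (χ₁.domRestrict (K.restrictScalars ℂ))
      (by intro x hx hxW
          simpa using hMl x hx hxW)
  have hχI : ∀ x ∈ I, χ x = -(lam s x) := by
    intro x hx
    have hxK : x ∈ K := Submodule.mem_sup_left hx
    rw [hχU x hxK]
    simpa using hχ₁U x hx
  have hχX : ∀ x ∈ Ideal.span {(X i : MvPolynomial (Fin N) ℂ)}, χ x = 0 := by
    intro x hx
    have hxK : x ∈ K := Submodule.mem_sup_right hx
    rw [hχU x hxK]
    simpa using hχ₁W x hx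
  have hχl : ∀ x ∈ Mi ^ l, χ x = 0 := hχW
  set D : Finset (Fin N →₀ ℕ) :=
    (Fintype.piFinset fun _ : Fin N => Finset.range (l + 1)).image
      (fun g => Finsupp.equivFunOnFinite.symm g) with hD
  have hDmem : ∀ α : Fin N →₀ ℕ, α ∈ D ↔ ∀ j, α j ≤ l := by
    intro α
    constructor
    · rintro hα j
      obtain ⟨g, hg, rfl⟩ := Finset.mem_image.mp hα
      have := Finset.mem_range.mp ((Fintype.mem_piFinset.mp hg) j)
      simpa using Nat.lt_succ_iff.mp this
    · intro hj
      refine Finset.mem_image.mpr ⟨fun j => α j, ?_, ?_⟩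
      · exact Fintype.mem_piFinset.mpr fun j => Finset.mem_range.mpr (Nat.lt_succ_of_le (hj j))
      · simp
  set r : MvPolynomial (Fin N) ℂ :=
    ∑ β ∈ D, monomial β (if β i = 0 then χ (monomial β 1) else 0) with hr
  have hcoeff : ∀ α, coeff α r =
      if α ∈ D ∧ α i = 0 then χ (monomial α 1) else 0 := by
    intro α
    rw [hr, coeff_sum]
    simp_rw [coeff_monomial]
    rw [Finset.sum_ite_eq' D α _]
    by_cases h1 : α ∈ D
    · rw [if_pos h1]
      by_cases h2 : α i = 0
      · rw [if_pos h2, if_pos ⟨h1, h2⟩]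
      · rw [if_neg h2, if_neg (fun hh => h2 hh.2)]
    · rw [if_neg h1, if_neg (fun hh => h1 hh.1)]
  have hsupp : ∀ α ∈ r.support, α i = 0 := by
    intro α hα
    rw [MvPolynomial.mem_support_iff] at hα
    by_contra hne
    exact hα (by rw [hcoeff α, if_neg (fun hh => hne hh.2)])
  have hrep : ∀ α, coeff α r = χ (monomial α 1) := by
    intro α
    rw [hcoeff]
    by_cases h1 : α i = 0
    · by_cases h2 : α ∈ D
      · rw [if_pos ⟨h2, h1⟩]
      · rw [if_neg (fun hh => h2 hh.1)]
        have hex : ∃ j, l + 1 ≤ α j := by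
          by_contra hcon
          push_neg at hcon
          exact h2 ((hDmem α).mpr fun j => Nat.lt_succ_iff.mp (hcon j))
        obtain ⟨j, hj⟩ := hex
        exact (hχl _ (monomial_one_mem_pow (le_trans (Nat.le_succ l) hj))).symm
    · rw [if_neg (fun hh => h1 hh.2)]
      exact (hχX _ (monomial_one_mem_span_X h1)).symm
  have hlamr : ∀ f, lam r f = χ f := by
    intro f
    conv_rhs => rw [f.as_sum]
    rw [map_sum, lam_comm, lam_apply]
    refine Finset.sum_congr rfl fun α hα => ?_
    rw [hrep α]
    have hmono : (monomial α (coeff α f) : MvPolynomial (Fin N) ℂ)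
        = coeff α f • monomial α 1 := by
      rw [smul_monomial, smul_eq_mul, mul_one]
    rw [hmono, map_smul, smul_eq_mul]
  refine ⟨r, hsupp, fun f hf => ?_⟩
  rw [hlamr f, hχI f hf, add_neg_cancel]

lemma wHC_mul {M : Type*} [AddCommGroup M] (w : Fin N → M)
    {g : MvPolynomial (Fin N) ℂ} {d : M} (hg : g.IsWeightedHomogeneous w d)
    (f : MvPolynomial (Fin N) ℂ) (m : M) :
    weightedHomogeneousComponent w m (g * f)
      = g * weightedHomogeneousComponent w (m - d) f := by
  classical
  ext α
  rw [coeff_weightedHomogeneousComponent, coeff_mul, coeff_mul]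
  split_ifs with h
  · refine Finset.sum_congr rfl fun x hx => ?_
    rw [coeff_weightedHomogeneousComponent]
    by_cases hb : coeff x.1 g = 0
    · rw [hb, zero_mul, zero_mul]
    · have hxx := Finset.HasAntidiagonal.mem_antidiagonal.mp hx
      have hw : (Finsupp.weight w) x.1 + (Finsupp.weight w) x.2 = (Finsupp.weight w) α := by
        rw [← map_add, hxx]
      rw [hg hb, h] at hw
      rw [if_pos (by rw [← hw]; abel)]
  · symm
    refine Finset.sum_eq_zero fun x hx => ?_
    rw [coeff_weightedHomogeneousComponent]
    by_cases hb : coeff x.1 g = 0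
    · rw [hb, zero_mul]
    · rw [if_neg, mul_zero]
      intro hcon
      apply h
      have hxx := Finset.HasAntidiagonal.mem_antidiagonal.mp hx
      have hw : (Finsupp.weight w) x.1 + (Finsupp.weight w) x.2 = (Finsupp.weight w) α := by
        rw [← map_add, hxx]
      rw [hg hb, hcon] at hw
      rw [← hw]; abel
    
lemma mem_of_graded {M : Type*} [AddCommGroup M] (w : Fin N → M)
    {I : Ideal (MvPolynomial (Fin N) ℂ)} (hI : IsMGraded w I)
    {f : MvPolynomial (Fin N) ℂ} (hf : f ∈ I) (m : M) :
    weightedHomogeneousComponent w m f ∈ I := by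
  classical
  obtain ⟨S, hS, rfl⟩ := hI
  revert m
  induction hf using Submodule.span_induction with
  | mem x hx =>
    intro m
    obtain ⟨d, hd⟩ := hS x hx
    rcases eq_or_ne m d with rfl | hne
    · rw [hd.weightedHomogeneousComponent_same]
      exact Ideal.subset_span hx
    · rw [hd.weightedHomogeneousComponent_ne m hne]
      exact zero_mem _
  | zero => intro m; rw [map_zero]; exact zero_mem _
  | add x y hx hy ihx ihy => intro m; rw [map_add]; exact add_mem (ihx m) (ihy m)
  | smul a x hx ih =>
    intro m
    rw [smul_eq_mul]
    induction a using MvPolynomial.induction_on' with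
    | monomial u cc =>
      rw [wHC_mul w (isWeightedHomogeneous_monomial w u cc rfl) x m]
      exact Ideal.mul_mem_left _ _ (ih _)
    | add p q hp hq =>
      rw [add_mul, map_add]
      exact add_mem hp hq

lemma lam_homog_right {M : Type*} [AddCommGroup M] {w : Fin N → M} {m : M}
    {t : MvPolynomial (Fin N) ℂ} (ht : t.IsWeightedHomogeneous w m)
    (f : MvPolynomial (Fin N) ℂ) :
    lam t f = lam t (weightedHomogeneousComponent w m f) := by
  classical
  rw [lam_apply, lam_apply]
  refine Finset.sum_congr rfl fun α hα => ?_
  rw [coeff_weightedHomogeneousComponent, if_pos (ht (MvPolynomial.mem_support_iff.mp hα))]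

lemma lam_wHC_left {M : Type*} [AddCommGroup M] {w : Fin N → M} {m : M}
    {g : MvPolynomial (Fin N) ℂ} (hg : g.IsWeightedHomogeneous w m)
    (r : MvPolynomial (Fin N) ℂ) :
    lam (weightedHomogeneousComponent w m r) g = lam r g := by
  rw [lam_comm, ← lam_homog_right hg r]
  exact lam_comm g r

lemma support_wHC_subset {M : Type*} [AddCommGroup M] (w : Fin N → M) (m : M)
    (r : MvPolynomial (Fin N) ℂ) :
    (weightedHomogeneousComponent w m r).support ⊆ r.support := by
  classical
  intro α hα
  rw [MvPolynomial.mem_support_iff, coeff_weightedHomogeneousComponent] at hα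
  rw [MvPolynomial.mem_support_iff]
  intro h0
  apply hα
  split_ifs <;> simp [h0]

end MacaulayAux

/-- **Prop. 4.2 (quotient by a variable)**: for an `M`-graded ideal `I`, `m ∈ M`, and a
variable `x_i`, one has `Φ_i(D_0^m(I)) = Φ_i(D_0^m(I ∩ ⟨x_i⟩)) = D_0^{m - w(i)}(I : x_i)`:
for every `M`-homogeneous `q` of degree `m - w(i)`, the statements (a) `λ_q` vanishes on
`I : ⟨x_i⟩`; (b) `q = Φ_i(p)` for some `M`-homogeneous `p` of degree `m` with `λ_p`
vanishing on `I`; and (c) `q = Φ_i(p)` for some `M`-homogeneous `p` of degree `m` with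
`λ_p` vanishing on `I ∩ ⟨x_i⟩`, are all equivalent. -/
theorem dualSpace_colon_variable {N : ℕ} {M : Type*} [AddCommGroup M] (w : Fin N → M)
    (I : Ideal (MvPolynomial (Fin N) ℂ)) (hI : IsMGraded w I)
    (m : M) (i : Fin N)
    (q : MvPolynomial (Fin N) ℂ) (hq : q.IsWeightedHomogeneous w (m - w i)) :
    List.TFAE
      [ ∀ f ∈ I.colon ((Ideal.span {X i} : Ideal (MvPolynomial (Fin N) ℂ)) : Set (MvPolynomial (Fin N) ℂ)), lam q f = 0,
        ∃ p : MvPolynomial (Fin N) ℂ, p.IsWeightedHomogeneous w m ∧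
          (∀ f ∈ I, lam p f = 0) ∧ ∀ f : MvPolynomial (Fin N) ℂ, lam q f = lam p (X i * f),
        ∃ p : MvPolynomial (Fin N) ℂ, p.IsWeightedHomogeneous w m ∧
          (∀ f ∈ I ⊓ Ideal.span {X i}, lam p f = 0) ∧
          ∀ f : MvPolynomial (Fin N) ℂ, lam q f = lam p (X i * f) ] := by
  tfae_have 2 → 3 := by
    rintro ⟨p, hp, hv, he⟩
    exact ⟨p, hp, fun f hf => hv f (Submodule.mem_inf.mp hf).1, he⟩
  tfae_have 3 → 1 := by
    rintro ⟨p, hp, hv, he⟩ f hf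
    rw [Ideal.mem_colon_span_singleton] at hf
    rw [he f]
    exact hv _ (Submodule.mem_inf.mpr
      ⟨by rwa [mul_comm] at hf, Ideal.mem_span_singleton.mpr ⟨f, rfl⟩⟩)
  tfae_have 1 → 2 := by
    intro ha
    have hs_hom : (X i * q).IsWeightedHomogeneous w m := by
      have h1 := (isWeightedHomogeneous_X ℂ w i).mul hq
      have h2 : w i + (m - w i) = m := by abel
      rwa [h2] at h1
    have hvan : ∀ g ∈ I ⊓ Ideal.span {(X i : MvPolynomial (Fin N) ℂ)},
        lam (X i * q) g = 0 := by
      intro g hg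
      have hg1 := (Submodule.mem_inf.mp hg).1
      have hg2 := (Submodule.mem_inf.mp hg).2
      obtain ⟨h, rfl⟩ := Ideal.mem_span_singleton.mp hg2
      rw [lam_shift]
      exact ha h (Ideal.mem_colon_span_singleton.mpr (by rwa [mul_comm] at hg1))
    obtain ⟨r, hr_supp, hr⟩ := core i (X i * q) hvan
    refine ⟨X i * q + weightedHomogeneousComponent w m r, ?_, ?_, ?_⟩
    · exact (mem_weightedHomogeneousSubmodule _ _ _ _).mp
        (Submodule.add_mem _
          ((mem_weightedHomogeneousSubmodule _ _ _ _).mpr hs_hom)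
          ((mem_weightedHomogeneousSubmodule _ _ _ _).mpr
            (weightedHomogeneousComponent_isWeightedHomogeneous m r)))
    · intro f hf
      have hfm := mem_of_graded w hI hf m
      rw [lam_add_left, lam_homog_right hs_hom f,
        lam_homog_right (weightedHomogeneousComponent_isWeightedHomogeneous m r) f,
        lam_wHC_left (weightedHomogeneousComponent_isWeightedHomogeneous m f) r]
      exact hr _ hfm
    · intro f
      rw [lam_add_left, lam_shift]
      have hz : lam (weightedHomogeneousComponent w m r) (X i * f) = 0 := by
        apply lam_eq_zero_of
        intro α hα
        exact coeff_X_mul_of_ne (hr_supp α (support_wHC_subset w m r hα)) f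
      rw [hz, add_zero]
  tfae_finish
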